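/- Let a > 0, let ξ : ℝ → ℝ be continuous with ξ(x) ≥ a for all x, let κ > 0 be a constant, and suppose ε : ℝ → ℝ is differentiable on [0,∞), continuous, and satisfies ε'(t) = -ξ(ε(t))·ε(t) - κ·∫₀ᵗ ε(s) ds for all t ≥ 0. Then there exists a constant C ≥ 0 such that |ε'(t)| ≤ C for all t ≥ 0; one may take C = (sup{ξ(x) : |x| ≤ |ε(0)|})·|ε(0)| + √κ·|ε(0)|. -/

import Mathlib

open MeasureTheory intervalIntegral Filter

/-- **Uniform bound on the AZTND error derivative**: if `ξ` is continuous with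
`ξ ≥ a > 0`, `κ > 0`, and `ε` solves `ε'(t) = -ξ(ε(t))·ε(t) - κ·∫₀ᵗ ε(s) ds`
on `[0, ∞)`, then the derivative `ε'` is uniformly bounded on `[0, ∞)`; one may
take the bound `C = (sup{ξ(x) : |x| ≤ |ε(0)|})·|ε(0)| + √κ·|ε(0)|`. -/
theorem aztnd_deriv_bounded
    (a : ℝ) (ha : 0 < a)
    (ξ : ℝ → ℝ) (hξc : Continuous ξ) (hξ : ∀ x : ℝ, a ≤ ξ x)
    (κ : ℝ) (hκ : 0 < κ)
    (ε ε' : ℝ → ℝ) (hεc : Continuous ε)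
    (hd : ∀ t : ℝ, 0 ≤ t → HasDerivAt ε (ε' t) t)
    (hdyn : ∀ t : ℝ, 0 ≤ t →
      ε' t = -(ξ (ε t)) * ε t - κ * ∫ s in (0:ℝ)..t, ε s) :
    ∃ C : ℝ, 0 ≤ C ∧
      C = sSup (ξ '' Set.Icc (-|ε 0|) |ε 0|) * |ε 0| + Real.sqrt κ * |ε 0| ∧
      ∀ t : ℝ, 0 ≤ t → |ε' t| ≤ C := by
  set I : ℝ → ℝ := fun t => ∫ s in (0:ℝ)..t, ε s with hI
  have hId : ∀ t : ℝ, HasDerivAt I (ε t) t := fun t =>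
    (hεc.integral_hasStrictDerivAt 0 t).hasDerivAt
  set y : ℝ → ℝ := fun t => ε t ^ 2 + κ * I t ^ 2 with hy
  have hyd : ∀ t : ℝ, 0 ≤ t →
      HasDerivAt y (2 * ε t * ε' t + κ * (2 * I t * ε t)) t := by
    intro t ht
    have h1 := ((hd t ht).pow 2)
    have h2 := (((hId t).pow 2).const_mul κ)
    have := h1.add h2
    exact this.congr_deriv (by ring)
  -- y is antitone on [0, ∞)
  have hIcont : Continuous I :=
    continuous_iff_continuousAt.mpr fun t => (hId t).continuousAt
  have hycont : Continuous y := by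
    exact (hεc.pow 2).add (continuous_const.mul (hIcont.pow 2))
  have hanti : AntitoneOn y (Set.Ici 0) := by
    apply antitoneOn_of_deriv_nonpos (convex_Ici 0) hycont.continuousOn
    · intro t ht
      rw [interior_Ici] at ht
      exact (hyd t (le_of_lt ht)).differentiableAt.differentiableWithinAt
    · intro t ht
      rw [interior_Ici] at ht
      have ht' : (0:ℝ) ≤ t := le_of_lt ht
      rw [(hyd t ht').deriv, hdyn t ht']
      have hξ0 : 0 ≤ ξ (ε t) := (ha.le.trans (hξ _))
      have : 2 * ε t * (-(ξ (ε t)) * ε t - κ * I t) + κ * (2 * I t * ε t)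
          = -2 * ξ (ε t) * ε t ^ 2 := by ring
      rw [this]
      nlinarith [sq_nonneg (ε t)]
  have hy0 : ∀ t : ℝ, 0 ≤ t → y t ≤ y 0 := fun t ht =>
    hanti (Set.self_mem_Ici) ht ht
  have hI0 : I 0 = 0 := by simp [hI]
  have hyval : y 0 = ε 0 ^ 2 := by simp [hy, hI0]
  -- bounds
  have hεb : ∀ t : ℝ, 0 ≤ t → |ε t| ≤ |ε 0| := by
    intro t ht
    have h := hy0 t ht
    rw [hyval] at h
    have hyt : y t = ε t ^ 2 + κ * I t ^ 2 := rfl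
    have hsq : ε t ^ 2 ≤ ε 0 ^ 2 := by nlinarith [sq_nonneg (I t)]
    calc |ε t| = Real.sqrt (ε t ^ 2) := (Real.sqrt_sq_eq_abs _).symm
      _ ≤ Real.sqrt (ε 0 ^ 2) := Real.sqrt_le_sqrt hsq
      _ = |ε 0| := Real.sqrt_sq_eq_abs _
  have hIb : ∀ t : ℝ, 0 ≤ t → κ * |I t| ≤ Real.sqrt κ * |ε 0| := by
    intro t ht
    have h := hy0 t ht
    rw [hyval] at h
    have hyt : y t = ε t ^ 2 + κ * I t ^ 2 := rfl
    have hk : κ * I t ^ 2 ≤ ε 0 ^ 2 := by nlinarith [sq_nonneg (ε t)]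
    have hs : Real.sqrt κ * |I t| ≤ |ε 0| := by
      have : (Real.sqrt κ * |I t|) ^ 2 ≤ |ε 0| ^ 2 := by
        rw [mul_pow, Real.sq_sqrt hκ.le, sq_abs, sq_abs]; exact hk
      have h1 : 0 ≤ Real.sqrt κ * |I t| := by positivity
      nlinarith [abs_nonneg (ε 0)]
    have heq : κ * |I t| = Real.sqrt κ * (Real.sqrt κ * |I t|) := by
      rw [← mul_assoc, Real.mul_self_sqrt hκ.le]
    rw [heq]
    exact mul_le_mul_of_nonneg_left hs (Real.sqrt_nonneg κ)
  set M := sSup (ξ '' Set.Icc (-|ε 0|) |ε 0|) with hM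
  have hbdd : BddAbove (ξ '' Set.Icc (-|ε 0|) |ε 0|) :=
    (isCompact_Icc.image hξc).bddAbove
  have hMa : a ≤ M := by
    refine le_trans (hξ 0) (le_csSup hbdd ⟨0, ?_, rfl⟩)
    constructor <;> simp [abs_nonneg, neg_nonpos]
  have hMpos : 0 < M := lt_of_lt_of_le ha hMa
  refine ⟨M * |ε 0| + Real.sqrt κ * |ε 0|, by positivity, rfl, ?_⟩
  intro t ht
  rw [hdyn t ht]
  have hξM : ξ (ε t) ≤ M := by
    apply le_csSup hbdd
    exact ⟨ε t, abs_le.mp (hεb t ht), rfl⟩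
  have hξ0 : 0 ≤ ξ (ε t) := ha.le.trans (hξ _)
  calc |-(ξ (ε t)) * ε t - κ * I t| ≤ |(-(ξ (ε t))) * ε t| + |κ * I t| := abs_sub _ _
    _ = ξ (ε t) * |ε t| + κ * |I t| := by
        rw [abs_mul, abs_mul, abs_neg, abs_of_nonneg hξ0, abs_of_nonneg hκ.le]
    _ ≤ M * |ε 0| + Real.sqrt κ * |ε 0| := by
        have h1 : ξ (ε t) * |ε t| ≤ M * |ε 0| := by
          have := hεb t ht
          nlinarith [abs_nonneg (ε t)]
        linarith [hIb t ht]
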